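/- Let all square-root powers ρ_{i,t}, ρ̂_{i,t} be nonnegative and let n = Σ_{l=1}^L |A_l|. Then the infimum over all u ∈ ℝⁿ and all w ∈ (0,∞)ⁿ (indexed by pairs (l,k) with k ∈ A_l) of the weighted-MMSE objective F(u,w,ρ̂,ρ) equals Σ_{l=1}^L |A_l| − Σ_{l=1}^L Σ_{k∈A_l} ln(1 + SINR_{l,k}(ρ̂,ρ)), and this infimum is attained at u_{l,k} = u^opt_{l,k}(ρ̂,ρ) and w_{l,k} = 1 + SINR_{l,k}(ρ̂,ρ). -/

import Mathlib

open Finset Filter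

noncomputable section

/-- `Pset A k` : the set of cells in which user index `k` is active,
i.e. `P_k = {i : k ∈ A_i}`. -/
def Pset {L K : ℕ} (A : Fin L → Finset (Fin K)) (k : Fin K) : Finset (Fin L) :=
  Finset.univ.filter fun i => k ∈ A i

/-- The SINR denominator `D_{l,k}` for pilot powers `phat` and data powers `p`. -/
def Dterm {L K : ℕ} (M : ℕ) (σ2 : ℝ) (A : Fin L → Finset (Fin K))
    (β : Fin L → Fin K → Fin L → ℝ) (phat p : Fin L → Fin K → ℝ)
    (l : Fin L) (k : Fin K) : ℝ :=
  (M : ℝ) * (K : ℝ) * ∑ i ∈ (Pset A k).erase l, p i k * phat i k * β i k l ^ 2 +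
    ((K : ℝ) * ∑ i ∈ Pset A k, phat i k * β i k l + σ2) *
      ((∑ i, ∑ t ∈ A i, p i t * β i t l) + σ2)

/-- `SINR_{l,k}` for pilot powers `phat` and data powers `p`. -/
def SINR {L K : ℕ} (M : ℕ) (σ2 : ℝ) (A : Fin L → Finset (Fin K))
    (β : Fin L → Fin K → Fin L → ℝ) (phat p : Fin L → Fin K → ℝ)
    (l : Fin L) (k : Fin K) : ℝ :=
  (M : ℝ) * (K : ℝ) * p l k * phat l k * β l k l ^ 2 / Dterm M σ2 A β phat p l k

/-- `SINR_{l,k}(ρ̂, ρ)` : the SINR evaluated at squared square-root powers. -/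
def SINRsq {L K : ℕ} (M : ℕ) (σ2 : ℝ) (A : Fin L → Finset (Fin K))
    (β : Fin L → Fin K → Fin L → ℝ) (rhat rho : Fin L → Fin K → ℝ)
    (l : Fin L) (k : Fin K) : ℝ :=
  SINR M σ2 A β (fun i t => rhat i t ^ 2) (fun i t => rho i t ^ 2) l k

/-- The mean square error `e_{l,k}(u, ρ̂, ρ)`. -/
def eMSE {L K : ℕ} (M : ℕ) (σ2 : ℝ) (A : Fin L → Finset (Fin K))
    (β : Fin L → Fin K → Fin L → ℝ) (u : ℝ) (rhat rho : Fin L → Fin K → ℝ)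
    (l : Fin L) (k : Fin K) : ℝ :=
  (M : ℝ) * (K : ℝ) * u ^ 2 * ∑ i ∈ Pset A k, rho i k ^ 2 * rhat i k ^ 2 * β i k l ^ 2
    - 2 * Real.sqrt ((M : ℝ) * (K : ℝ)) * rho l k * rhat l k * u * β l k l
    + u ^ 2 * ((K : ℝ) * ∑ i ∈ Pset A k, rhat i k ^ 2 * β i k l + σ2) *
        ((∑ i, ∑ t ∈ A i, rho i t ^ 2 * β i t l) + σ2)
    + 1

/-- The leading (quadratic in `u`) coefficient `A_{l,k}(ρ̂, ρ)` of `e_{l,k}`. -/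
def Acoef {L K : ℕ} (M : ℕ) (σ2 : ℝ) (A : Fin L → Finset (Fin K))
    (β : Fin L → Fin K → Fin L → ℝ) (rhat rho : Fin L → Fin K → ℝ)
    (l : Fin L) (k : Fin K) : ℝ :=
  (M : ℝ) * (K : ℝ) * ∑ i ∈ Pset A k, rho i k ^ 2 * rhat i k ^ 2 * β i k l ^ 2 +
    ((K : ℝ) * ∑ i ∈ Pset A k, rhat i k ^ 2 * β i k l + σ2) *
      ((∑ i, ∑ t ∈ A i, rho i t ^ 2 * β i t l) + σ2)

/-- The optimal beamforming coefficient `u^opt_{l,k}(ρ̂, ρ)`. -/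
def uopt {L K : ℕ} (M : ℕ) (σ2 : ℝ) (A : Fin L → Finset (Fin K))
    (β : Fin L → Fin K → Fin L → ℝ) (rhat rho : Fin L → Fin K → ℝ)
    (l : Fin L) (k : Fin K) : ℝ :=
  Real.sqrt ((M : ℝ) * (K : ℝ)) * rho l k * rhat l k * β l k l /
    Acoef M σ2 A β rhat rho l k

/-- The weighted-MMSE objective `F(u, w, ρ̂, ρ)`. -/
def Fobj {L K : ℕ} (M : ℕ) (σ2 : ℝ) (A : Fin L → Finset (Fin K))
    (β : Fin L → Fin K → Fin L → ℝ) (u w rhat rho : Fin L → Fin K → ℝ) : ℝ :=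
  ∑ l, ∑ k ∈ A l, (w l k * eMSE M σ2 A β (u l k) rhat rho l k - Real.log (w l k))

/-- The pilot-power quadratic coefficient `η̂_{l,k}(u, w, ρ)`. -/
def etaHat {L K : ℕ} (M : ℕ) (σ2 : ℝ) (A : Fin L → Finset (Fin K))
    (β : Fin L → Fin K → Fin L → ℝ) (u w rho : Fin L → Fin K → ℝ)
    (l : Fin L) (k : Fin K) : ℝ :=
  rho l k ^ 2 * (M : ℝ) * (K : ℝ) * ∑ i ∈ Pset A k, w i k * u i k ^ 2 * β l k i ^ 2 +
    (K : ℝ) * ∑ j ∈ Pset A k, w j k * u j k ^ 2 * β l k j *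
      ((∑ i, ∑ t ∈ A i, rho i t ^ 2 * β i t j) + σ2)

/-- The data-power quadratic coefficient `η_{l,k}(u, w, ρ̂)`. -/
def etaData {L K : ℕ} (M : ℕ) (σ2 : ℝ) (A : Fin L → Finset (Fin K))
    (β : Fin L → Fin K → Fin L → ℝ) (u w rhat : Fin L → Fin K → ℝ)
    (l : Fin L) (k : Fin K) : ℝ :=
  rhat l k ^ 2 * (M : ℝ) * (K : ℝ) * ∑ i ∈ Pset A k, w i k * u i k ^ 2 * β l k i ^ 2 +
    ∑ i, ∑ t ∈ A i, w i t * u i t ^ 2 * β l k i *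
      ((K : ℝ) * ∑ j ∈ Pset A t, rhat j t ^ 2 * β j t i + σ2)

/-- For nonnegative square-root powers, the infimum of the
weighted-MMSE objective `F(u, w, ρ̂, ρ)` over all real `u` and positive `w`
equals `Σ_l |A_l| − Σ_l Σ_{k∈A_l} ln(1 + SINR_{l,k}(ρ̂,ρ))`, and it is attained
at `u_{l,k} = u^opt_{l,k}(ρ̂,ρ)` and `w_{l,k} = 1 + SINR_{l,k}(ρ̂,ρ)`. -/
lemma aux_perterm {L K : ℕ} (M : ℕ) (σ2 : ℝ) (hσ : 0 < σ2)
    (A : Fin L → Finset (Fin K)) (β : Fin L → Fin K → Fin L → ℝ)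
    (hβ : ∀ i t l, 0 ≤ β i t l) (rhat rho : Fin L → Fin K → ℝ)
    (l : Fin L) (k : Fin K) (hk : k ∈ A l) :
    0 < 1 + SINRsq M σ2 A β rhat rho l k ∧
    (∀ u w : ℝ, 0 < w →
      1 - Real.log (1 + SINRsq M σ2 A β rhat rho l k) ≤
        w * eMSE M σ2 A β u rhat rho l k - Real.log w) ∧
    (1 + SINRsq M σ2 A β rhat rho l k) *
        eMSE M σ2 A β (uopt M σ2 A β rhat rho l k) rhat rho l k -
      Real.log (1 + SINRsq M σ2 A β rhat rho l k) =
      1 - Real.log (1 + SINRsq M σ2 A β rhat rho l k) := by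
  have hMK : (0:ℝ) ≤ (M:ℝ) * (K:ℝ) := by positivity
  have h2 : 0 ≤ ∑ i ∈ Pset A k, rhat i k ^ 2 * β i k l :=
    Finset.sum_nonneg fun i _ => mul_nonneg (sq_nonneg _) (hβ i k l)
  have h3 : 0 ≤ ∑ i, ∑ t ∈ A i, rho i t ^ 2 * β i t l :=
    Finset.sum_nonneg fun i _ =>
      Finset.sum_nonneg fun t _ => mul_nonneg (sq_nonneg _) (hβ i t l)
  have hA : 0 < Acoef M σ2 A β rhat rho l k := by
    have h1 : 0 ≤ ∑ i ∈ Pset A k, rho i k ^ 2 * rhat i k ^ 2 * β i k l ^ 2 :=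
      Finset.sum_nonneg fun i _ => by positivity
    simp only [Acoef]
    nlinarith [mul_nonneg hMK h1, mul_nonneg (Nat.cast_nonneg K : (0:ℝ) ≤ (K:ℝ)) h2]
  have hD : 0 < Dterm M σ2 A β (fun i t => rhat i t ^ 2) (fun i t => rho i t ^ 2) l k := by
    have h1 : 0 ≤ ∑ i ∈ (Pset A k).erase l, rho i k ^ 2 * rhat i k ^ 2 * β i k l ^ 2 :=
      Finset.sum_nonneg fun i _ => by positivity
    simp only [Dterm]
    nlinarith [mul_nonneg hMK h1, mul_nonneg (Nat.cast_nonneg K : (0:ℝ) ≤ (K:ℝ)) h2]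
  set S := Acoef M σ2 A β rhat rho l k with hSdef
  set D := Dterm M σ2 A β (fun i t => rhat i t ^ 2) (fun i t => rho i t ^ 2) l k with hDdef
  set B := Real.sqrt ((M:ℝ) * (K:ℝ)) * rho l k * rhat l k * β l k l with hBdef
  have hl : l ∈ Pset A k := by simp [Pset, hk]
  have hB2 : (Real.sqrt ((M:ℝ)*(K:ℝ)))^2 = (M:ℝ)*(K:ℝ) := Real.sq_sqrt hMK
  have hBsq : B ^ 2 = (M:ℝ)*(K:ℝ) * (rho l k ^ 2 * rhat l k ^ 2 * β l k l ^ 2) := by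
    rw [hBdef, show (Real.sqrt ((M:ℝ)*(K:ℝ)) * rho l k * rhat l k * β l k l)^2
        = Real.sqrt ((M:ℝ)*(K:ℝ))^2 * (rho l k ^ 2 * rhat l k ^ 2 * β l k l ^ 2) from by
          ring, hB2]
  have hsum := Finset.sum_erase_add (Pset A k)
    (fun i => rho i k ^ 2 * rhat i k ^ 2 * β i k l ^ 2) hl
  have hid : S = D + (M:ℝ)*(K:ℝ) * (rho l k ^ 2 * rhat l k ^ 2 * β l k l ^ 2) := by
    rw [hSdef, hDdef]
    simp only [Acoef, Dterm]
    rw [← hsum]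
    ring
  have hsinr : 1 + SINRsq M σ2 A β rhat rho l k = S / D := by
    simp only [SINRsq, SINR, ← hDdef]
    rw [hid]
    field_simp
  have he : ∀ u : ℝ, eMSE M σ2 A β u rhat rho l k = S * u ^ 2 - 2 * B * u + 1 := by
    intro u
    rw [hSdef, hBdef]
    simp only [eMSE, Acoef]
    ring
  have eineq : ∀ u : ℝ, D / S ≤ eMSE M σ2 A β u rhat rho l k := by
    intro u
    rw [he u, div_le_iff₀ hA]
    nlinarith [sq_nonneg (S * u - B), hid, hBsq]
  have hpos : 0 < 1 + SINRsq M σ2 A β rhat rho l k := by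
    rw [hsinr]; exact div_pos hA hD
  refine ⟨hpos, ?_, ?_⟩
  · intro u w hw
    have h1 : w * (D / S) ≤ w * eMSE M σ2 A β u rhat rho l k :=
      mul_le_mul_of_nonneg_left (eineq u) hw.le
    have hc : 0 < D / S := div_pos hD hA
    have hlog : Real.log (w * (D / S)) ≤ w * (D / S) - 1 :=
      Real.log_le_sub_one_of_pos (mul_pos hw hc)
    rw [Real.log_mul hw.ne' hc.ne'] at hlog
    have h3 : Real.log (1 + SINRsq M σ2 A β rhat rho l k) = Real.log S - Real.log D := by
      rw [hsinr, Real.log_div hA.ne' hD.ne']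
    have h4 : Real.log (D / S) = Real.log D - Real.log S := Real.log_div hD.ne' hA.ne'
    linarith
  · have heval : eMSE M σ2 A β (uopt M σ2 A β rhat rho l k) rhat rho l k = D / S := by
      rw [he]
      have huo : uopt M σ2 A β rhat rho l k = B / S := by
        rw [uopt, hBdef, hSdef]
      rw [huo]
      field_simp
      linear_combination hid - hBsq
    have hone : (1 + SINRsq M σ2 A β rhat rho l k) *
        eMSE M σ2 A β (uopt M σ2 A β rhat rho l k) rhat rho l k = 1 := by
      rw [hsinr, heval]
      field_simp
    rw [hone]

theorem stmt1 {L K : ℕ} (M : ℕ) (hL : 0 < L) (hK : 0 < K) (hM : 0 < M)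
    (σ2 : ℝ) (hσ : 0 < σ2)
    (A : Fin L → Finset (Fin K))
    (β : Fin L → Fin K → Fin L → ℝ) (hβ : ∀ i t l, 0 ≤ β i t l)
    (rhat rho : Fin L → Fin K → ℝ)
    (hrhat : ∀ i t, 0 ≤ rhat i t) (hrho : ∀ i t, 0 ≤ rho i t) :
    IsLeast
      {y : ℝ | ∃ u w : Fin L → Fin K → ℝ,
        (∀ l, ∀ k ∈ A l, 0 < w l k) ∧ y = Fobj M σ2 A β u w rhat rho}
      ((∑ l, ((A l).card : ℝ)) -
        ∑ l, ∑ k ∈ A l, Real.log (1 + SINRsq M σ2 A β rhat rho l k)) ∧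
    Fobj M σ2 A β (fun l k => uopt M σ2 A β rhat rho l k)
        (fun l k => 1 + SINRsq M σ2 A β rhat rho l k) rhat rho =
      (∑ l, ((A l).card : ℝ)) -
        ∑ l, ∑ k ∈ A l, Real.log (1 + SINRsq M σ2 A β rhat rho l k) := by
  have key := fun (l : Fin L) (k : Fin K) (hk : k ∈ A l) =>
    aux_perterm M σ2 hσ A β hβ rhat rho l k hk
  have hre : (∑ l, ((A l).card : ℝ)) -
      ∑ l, ∑ k ∈ A l, Real.log (1 + SINRsq M σ2 A β rhat rho l k) =
      ∑ l, ∑ k ∈ A l, (1 - Real.log (1 + SINRsq M σ2 A β rhat rho l k)) := by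
    simp only [Finset.sum_sub_distrib, Finset.sum_const, nsmul_eq_mul, mul_one]
  have hval : Fobj M σ2 A β (fun l k => uopt M σ2 A β rhat rho l k)
      (fun l k => 1 + SINRsq M σ2 A β rhat rho l k) rhat rho =
      (∑ l, ((A l).card : ℝ)) -
        ∑ l, ∑ k ∈ A l, Real.log (1 + SINRsq M σ2 A β rhat rho l k) := by
    rw [hre]
    unfold Fobj
    exact Finset.sum_congr rfl fun l _ =>
      Finset.sum_congr rfl fun k hk => (key l k hk).2.2
  refine ⟨⟨⟨fun l k => uopt M σ2 A β rhat rho l k,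
      fun l k => 1 + SINRsq M σ2 A β rhat rho l k,
      fun l k hk => (key l k hk).1, hval.symm⟩, ?_⟩, hval⟩
  rintro y ⟨u, w, hw, rfl⟩
  rw [hre]
  unfold Fobj
  exact Finset.sum_le_sum fun l _ =>
    Finset.sum_le_sum fun k hk => (key l k hk).2.1 (u l k) (w l k) (hw l k hk)
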